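/- Let d ≥ 1, τ > 0 and smooth curve ρ : [0,T] → ℝ^d with ρ(t) ≠ 0 for all t. Set χ(t) = τρ̇(t) and φ(t) = τχ̇(t) + χ(t). Then with α(t) = −((E+G)/((E+F+G)F))·(ρ(t)·φ(t))/|ρ(t)|⁴, β(t) = 1/(F|ρ(t)|²), and u^n_m(t) = (1/τ)(α(t)ρ^n(t)ρ^m(t) + β(t)ρ^n(t)φ^m(t)), the curve p(t) = (ρ(t), χ(t)) solves ṗ = X₀(p) + Σ_{m,n} u^n_m(t) X^m_n(p). -/

import Mathlib

open Finset

/-- Kronecker delta on `Fin d`. -/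
def kd {d : ℕ} (a b : Fin d) : ℝ := if a = b then 1 else 0

/-- Coefficient `σ^i_j(m,n) = E δ^i_j δ^m_n + F δ^{im} δ_{jn} + G δ^i_n δ_j^m`. -/
def sigmaCoeff (E F G : ℝ) {d : ℕ} (m n i j : Fin d) : ℝ :=
  E * kd i j * kd m n + F * kd i m * kd j n + G * kd i n * kd j m

/-- The vector field `X^m_n`, with vanishing `ρ`-component. -/
def Xmn (E F G : ℝ) {d : ℕ} (m n : Fin d)
    (p : (Fin d → ℝ) × (Fin d → ℝ)) : (Fin d → ℝ) × (Fin d → ℝ) :=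
  (0, fun i => ∑ j, p.1 j * sigmaCoeff E F G m n i j)

/-- The drift vector field `X₀(ρ,χ) = (χ/τ, −χ/τ)`. -/
noncomputable def X0 (τ : ℝ) {d : ℕ}
    (p : (Fin d → ℝ) × (Fin d → ℝ)) : (Fin d → ℝ) × (Fin d → ℝ) :=
  ((1 / τ) • p.2, -(1 / τ) • p.2)

lemma innerSumKd {d : ℕ} (E F G : ℝ) (ρ : Fin d → ℝ) (m n i : Fin d) :
    ∑ j, ρ j * sigmaCoeff E F G m n i j
    = E * ρ i * kd m n + F * kd i m * ρ n + G * kd i n * ρ m := by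
  simp [sigmaCoeff, kd, mul_add, Finset.sum_add_distrib, mul_ite, ite_mul,
    Finset.sum_ite_eq, Finset.sum_ite_eq']
  ring

lemma double_sum {d : ℕ} (E F G a b : ℝ) (ρ φ : Fin d → ℝ) (i : Fin d) :
    ∑ m, ∑ n, (a * ρ n * ρ m + b * ρ n * φ m) * (∑ j, ρ j * sigmaCoeff E F G m n i j)
    = ρ i * ((E + F + G) * a * (∑ j, ρ j ^ 2) + (E + G) * b * (∑ j, ρ j * φ j))
      + F * b * (∑ j, ρ j ^ 2) * φ i := by
  simp only [innerSumKd]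
  simp only [mul_add, add_mul, Finset.sum_add_distrib, mul_ite, ite_mul, mul_zero, zero_mul,
    mul_one, one_mul, kd, Finset.sum_ite_irrel, Finset.sum_const_zero, Finset.sum_ite_eq,
    Finset.sum_ite_eq', Finset.mem_univ, if_true, Finset.mul_sum, Finset.sum_mul]
  simp only [← Finset.sum_add_distrib]
  exact Finset.sum_congr rfl (fun x _ => by ring)

lemma key_scalar {d : ℕ} (E F G τ a b : ℝ) (hτ : τ ≠ 0) (hF : F ≠ 0)
    (hEFG : E + F + G ≠ 0) (ρ φ χ : Fin d → ℝ)
    (hr : (∑ j, ρ j ^ 2) ≠ 0)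
    (ha : a = -((E + G) / ((E + F + G) * F)) * (∑ j, ρ j * φ j) / (∑ j, ρ j ^ 2) ^ 2)
    (hb : b = 1 / (F * ∑ j, ρ j ^ 2)) (i : Fin d) :
    -(1 / τ) * χ i +
      ∑ m, ∑ n, (1 / τ * (a * ρ n * ρ m + b * ρ n * φ m)) *
        (∑ j, ρ j * sigmaCoeff E F G m n i j)
    = (φ i - χ i) / τ := by
  have h1 : ∑ m, ∑ n, (1 / τ * (a * ρ n * ρ m + b * ρ n * φ m)) *
        (∑ j, ρ j * sigmaCoeff E F G m n i j)
      = 1 / τ * (∑ m, ∑ n, (a * ρ n * ρ m + b * ρ n * φ m) *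
        (∑ j, ρ j * sigmaCoeff E F G m n i j)) := by
    rw [Finset.mul_sum]
    refine Finset.sum_congr rfl fun m _ => ?_
    rw [Finset.mul_sum]
    exact Finset.sum_congr rfl fun n _ => by ring
  rw [h1, double_sum, ha, hb]
  field_simp
  ring

theorem explicit_control_solves (d : ℕ) (hd : 1 ≤ d) (τ : ℝ) (hτ : 0 < τ)
    (E F G : ℝ) (hF : 0 < F) (hEFG : 0 < E + F + G)
    (T : ℝ) (hT : 0 < T)
    (ρ ρ' ρ'' : ℝ → Fin d → ℝ)
    (hρ' : ∀ t, HasDerivAt ρ (ρ' t) t)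
    (hρ'' : ∀ t, HasDerivAt ρ' (ρ'' t) t)
    (hρ0 : ∀ t ∈ Set.Icc (0 : ℝ) T, ρ t ≠ 0)
    (χ φ : ℝ → Fin d → ℝ)
    (hχ : ∀ t, χ t = τ • ρ' t)
    (hφ : ∀ t, φ t = τ • (τ • ρ'' t) + χ t)
    (α β : ℝ → ℝ)
    (hα : ∀ t, α t = -((E + G) / ((E + F + G) * F)) *
      (∑ j, ρ t j * φ t j) / (∑ j, ρ t j ^ 2) ^ 2)
    (hβ : ∀ t, β t = 1 / (F * ∑ j, ρ t j ^ 2))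
    (u : ℝ → Fin d → Fin d → ℝ)
    (hu : ∀ t n m, u t n m = (1 / τ) * (α t * ρ t n * ρ t m + β t * ρ t n * φ t m)) :
    ∀ t ∈ Set.Icc (0 : ℝ) T,
      HasDerivAt (fun s => (ρ s, χ s))
        (X0 τ (ρ t, χ t) + ∑ m, ∑ n, u t n m • Xmn E F G m n (ρ t, χ t)) t := by
  intro t ht
  have hτ' : τ ≠ 0 := ne_of_gt hτ
  have hr : (∑ j, ρ t j ^ 2) ≠ 0 := by
    intro h
    apply hρ0 t ht
    funext i
    have h0 : ∀ j ∈ Finset.univ, (0:ℝ) ≤ ρ t j ^ 2 := fun j _ => sq_nonneg _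
    have := (Finset.sum_eq_zero_iff_of_nonneg h0).1 h i (Finset.mem_univ i)
    simpa [pow_eq_zero_iff] using this
  have key : X0 τ (ρ t, χ t) + ∑ m, ∑ n, u t n m • Xmn E F G m n (ρ t, χ t)
      = (ρ' t, τ • ρ'' t) := by
    apply Prod.ext
    · simp only [X0, Xmn, Prod.fst_add, Prod.fst_sum, Prod.smul_fst, smul_zero,
        Finset.sum_const_zero, add_zero, hχ, smul_smul]
      rw [one_div, inv_mul_cancel₀ hτ', one_smul]
    · simp only [X0, Xmn, Prod.snd_add, Prod.snd_sum, Prod.smul_snd]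
      funext i
      simp only [Pi.add_apply, Pi.smul_apply, Pi.neg_apply, Finset.sum_apply,
        smul_eq_mul, hu]
      have := key_scalar E F G τ (α t) (β t) hτ' (ne_of_gt hF) (ne_of_gt hEFG)
        (ρ t) (φ t) (χ t) hr (hα t) (hβ t) i
      rw [this, hφ t]
      simp only [Pi.add_apply, Pi.smul_apply, smul_eq_mul]
      field_simp
      ring
  rw [key]
  refine (hρ' t).prodMk ?_
  have hχf : χ = fun s => τ • ρ' s := funext hχ
  rw [hχf]
  exact (hρ'' t).const_smul τ
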